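/- Let Φ be a Young function satisfying the Δ₂-condition. Then there exist q ∈ (0,∞) and C ∈ [1,∞) such that for all 0 < t ≤ s, (1/t)·Φ⁻¹(1/t)^{-q} ≤ C·(1/s)·Φ⁻¹(1/s)^{-q}. -/

import Mathlib

open MeasureTheory ENNReal NNReal

noncomputable section

/-- A Young function `Φ : [0,∞] → [0,∞]`: increasing, convex, `Φ(0)=0`, `Φ(∞)=∞`,
`lim_{t→0}Φ(t)=0`, with `a(Φ)<∞` and `b(Φ)>0`. -/
structure YoungFunction (Φ : ℝ≥0∞ → ℝ≥0∞) : Prop where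
  mono : Monotone Φ
  map_zero : Φ 0 = 0
  map_top : Φ ⊤ = ⊤
  convex : ∀ (a b : ℝ≥0) (x y : ℝ≥0∞), a + b = 1 →
    Φ ((a : ℝ≥0∞) * x + (b : ℝ≥0∞) * y) ≤ (a : ℝ≥0∞) * Φ x + (b : ℝ≥0∞) * Φ y
  tendsto_zero : Filter.Tendsto Φ (nhdsWithin 0 (Set.Ioi 0)) (nhds 0)
  exists_pos : ∃ t : ℝ≥0∞, t ≠ ⊤ ∧ 0 < Φ t
  exists_finite : ∃ t : ℝ≥0∞, 0 < t ∧ Φ t < ⊤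

/-- The generalized inverse `Φ⁻¹(u) = inf{t ≥ 0 : Φ(t) > u}` (with `inf ∅ = ∞`,
so `Φ⁻¹(∞) = ∞`). -/
def yinv (Φ : ℝ≥0∞ → ℝ≥0∞) (u : ℝ≥0∞) : ℝ≥0∞ := sInf {t | u < Φ t}


lemma yinv_mono (Φ : ℝ≥0∞ → ℝ≥0∞) : Monotone (yinv Φ) := fun u v h =>
  sInf_le_sInf fun t ht => lt_of_le_of_lt h ht

lemma yinv_double (Φ : ℝ≥0∞ → ℝ≥0∞) (h0 : Φ 0 = 0) (k : ℝ≥0) (hk0 : (k : ℝ≥0∞) ≠ 0)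
    (hΔ : ∀ r : ℝ≥0∞, 0 < r → Φ (2 * r) ≤ (k : ℝ≥0∞) * Φ r) (u : ℝ≥0∞) :
    2 * yinv Φ u ≤ yinv Φ ((k : ℝ≥0∞) * u) := by
  refine le_sInf fun t ht => ?_
  simp only [Set.mem_setOf_eq] at ht
  have htpos : 0 < t := by
    rcases eq_zero_or_pos t with h | h
    · rw [h, h0] at ht; exact absurd ht (by simp)
    · exact h
  have h2 : 2 * (t / 2) = t := ENNReal.mul_div_cancel' (fun h => absurd h two_ne_zero) (fun h => absurd h (by norm_num))
  have hhalf : 0 < t / 2 := ENNReal.div_pos htpos.ne' (by norm_num)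
  have hΦt : Φ t ≤ (k : ℝ≥0∞) * Φ (t / 2) := by
    have := hΔ (t / 2) hhalf; rwa [h2] at this
  have hu : u < Φ (t / 2) :=
    (ENNReal.mul_lt_mul_iff_right hk0 ENNReal.coe_ne_top).mp (ht.trans_le hΦt)
  have : yinv Φ u ≤ t / 2 := sInf_le hu
  calc 2 * yinv Φ u ≤ 2 * (t / 2) := _root_.mul_le_mul_right this 2
    _ = t := h2

lemma yinv_pow (Φ : ℝ≥0∞ → ℝ≥0∞) (h0 : Φ 0 = 0) (k : ℝ≥0) (hk0 : (k : ℝ≥0∞) ≠ 0)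
    (hΔ : ∀ r : ℝ≥0∞, 0 < r → Φ (2 * r) ≤ (k : ℝ≥0∞) * Φ r) (n : ℕ) (u : ℝ≥0∞) :
    2 ^ n * yinv Φ u ≤ yinv Φ ((k : ℝ≥0∞) ^ n * u) := by
  induction n with
  | zero => simp
  | succ m ih =>
    calc 2 ^ (m + 1) * yinv Φ u = 2 * (2 ^ m * yinv Φ u) := by ring
      _ ≤ 2 * yinv Φ ((k : ℝ≥0∞) ^ m * u) := _root_.mul_le_mul_right ih 2
      _ ≤ yinv Φ ((k : ℝ≥0∞) * ((k : ℝ≥0∞) ^ m * u)) := yinv_double Φ h0 k hk0 hΔ _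
      _ = yinv Φ ((k : ℝ≥0∞) ^ (m + 1) * u) := by ring_nf

/-- Delta2 implies an almost-decreasing estimate. -/
theorem stmt4 (Φ : ℝ≥0∞ → ℝ≥0∞) (hΦ : YoungFunction Φ)
    (hΔ : ∃ k : ℝ≥0, 1 < k ∧ ∀ r : ℝ≥0∞, 0 < r → Φ (2 * r) ≤ (k : ℝ≥0∞) * Φ r) :
    ∃ (q : ℝ) (C : ℝ≥0), 0 < q ∧ 1 ≤ C ∧
      ∀ t s : ℝ≥0∞, 0 < t → t ≤ s → s ≠ ⊤ →
        t⁻¹ * (yinv Φ t⁻¹) ^ (-q) ≤ (C : ℝ≥0∞) * (s⁻¹ * (yinv Φ s⁻¹) ^ (-q)) := by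
  obtain ⟨k, hk1, hΔ⟩ := hΔ
  have hk0 : (k : ℝ≥0∞) ≠ 0 := by
    simp only [ne_eq, ENNReal.coe_eq_zero]
    exact (zero_lt_one.trans hk1).ne'
  set q : ℝ := Real.logb 2 k with hq
  have hqpos : 0 < q := Real.logb_pos one_lt_two (by exact_mod_cast hk1)
  have h2q : (2 : ℝ≥0∞) ^ q = (k : ℝ≥0∞) := by
    have hk : (2 : ℝ) ^ q = (k : ℝ) :=
      Real.rpow_logb two_pos (by norm_num) (by exact_mod_cast zero_lt_one.trans hk1)
    rw [show (2 : ℝ≥0∞) = ENNReal.ofReal 2 by simp [ENNReal.ofReal_ofNat],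
      ENNReal.ofReal_rpow_of_pos two_pos, hk, ENNReal.ofReal_coe_nnreal]
  refine ⟨q, k, hqpos, hk1.le, fun t s ht hts hs => ?_⟩
  set u : ℝ≥0∞ := t⁻¹
  set v : ℝ≥0∞ := s⁻¹
  have hvu : v ≤ u := ENNReal.inv_le_inv.mpr hts
  have hv0 : 0 < v := ENNReal.inv_pos.mpr hs
  have hut : u ≠ ⊤ := by simpa [u] using ht.ne'
  set A : ℝ≥0∞ := yinv Φ u
  set B : ℝ≥0∞ := yinv Φ v
  have hBA : B ≤ A := yinv_mono Φ hvu
  rcases eq_or_ne A ⊤ with hA | hA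
  · rw [hA, ENNReal.top_rpow_of_neg (neg_neg_iff_pos.mpr hqpos), mul_zero]
    exact zero_le
  rcases eq_or_ne B 0 with hB | hB
  · rw [hB, ENNReal.zero_rpow_of_neg (neg_neg_iff_pos.mpr hqpos),
      ENNReal.mul_top hv0.ne', ENNReal.mul_top hk0]
    exact le_top
  have hBt : B ≠ ⊤ := fun h => hA (top_le_iff.mp (h ▸ hBA))
  have hA0 : A ≠ 0 := fun h => hB (le_antisymm (h ▸ hBA) (zero_le))
  -- nonzero/finite of A^q, B^q
  have hAq0 : A ^ q ≠ 0 := by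
    simp [ENNReal.rpow_eq_zero_iff, hA0, hA, hqpos.le, not_lt.mpr hqpos.le]
  have hAqt : A ^ q ≠ ⊤ := by
    simp [ENNReal.rpow_eq_top_iff, hA0, hA, not_lt.mpr hqpos.le]
  have hBq0 : B ^ q ≠ 0 := by
    simp [ENNReal.rpow_eq_zero_iff, hB, hBt, not_lt.mpr hqpos.le]
  have hBqt : B ^ q ≠ ⊤ := by
    simp [ENNReal.rpow_eq_top_iff, hB, hBt, not_lt.mpr hqpos.le]
  -- reduce to u * B^q ≤ k * v * A^q
  have key : u * B ^ q ≤ (k : ℝ≥0∞) * v * A ^ q := by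
    -- find minimal n with u ≤ k^n * v
    have hex : ∃ n : ℕ, u ≤ (k : ℝ≥0∞) ^ n * v := by
      obtain ⟨n, hn⟩ := pow_unbounded_of_one_lt ((u / v).toNNReal) hk1
      refine ⟨n, ?_⟩
      have hdiv : u / v ≤ (k : ℝ≥0∞) ^ n := by
        have hfin : u / v ≠ ⊤ := (ENNReal.div_lt_top hut hv0.ne').ne
        rw [← ENNReal.coe_toNNReal hfin]
        exact_mod_cast hn.le
      calc u = u / v * v := (ENNReal.div_mul_cancel hv0.ne' (ENNReal.inv_ne_top.mpr (ht.trans_le hts).ne')).symm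
        _ ≤ (k : ℝ≥0∞) ^ n * v := _root_.mul_le_mul_left hdiv v
    have hfind : u ≤ (k : ℝ≥0∞) ^ (Nat.find hex) * v := Nat.find_spec hex
    rcases Nat.eq_zero_or_pos (Nat.find hex) with hm | hm
    · rw [hm] at hfind
      have huv : u = v := le_antisymm (by simpa using hfind) hvu
      have heq : (k : ℝ≥0∞) * v * A ^ q = (k : ℝ≥0∞) * (v * A ^ q) := by ring
      rw [huv, heq]
      calc v * B ^ q ≤ v * A ^ q := _root_.mul_le_mul_right (ENNReal.rpow_le_rpow hBA hqpos.le) v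
        _ ≤ (k : ℝ≥0∞) * (v * A ^ q) := le_mul_of_one_le_left (zero_le) (by exact_mod_cast hk1.le)
    · set m := Nat.find hex - 1 with hmdef
      have hsucc : Nat.find hex = m + 1 := (Nat.succ_pred_eq_of_pos hm).symm
      rw [hsucc] at hfind
      have hmin : ¬ (u ≤ (k : ℝ≥0∞) ^ m * v) :=
        Nat.find_min hex (by omega)
      have hlt : (k : ℝ≥0∞) ^ m * v < u := lt_of_not_ge hmin
      have hpow : 2 ^ m * B ≤ A := by
        calc 2 ^ m * B ≤ yinv Φ ((k : ℝ≥0∞) ^ m * v) := yinv_pow Φ hΦ.map_zero k hk0 hΔ m v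
          _ ≤ A := yinv_mono Φ hlt.le
      have hpowq : (k : ℝ≥0∞) ^ m * B ^ q ≤ A ^ q := by
        have h1 : ((2 : ℝ≥0∞) ^ m * B) ^ q ≤ A ^ q := ENNReal.rpow_le_rpow hpow hqpos.le
        have h2 : ((2 : ℝ≥0∞) ^ m * B) ^ q = (k : ℝ≥0∞) ^ m * B ^ q := by
          rw [ENNReal.mul_rpow_of_nonneg _ _ hqpos.le, ← ENNReal.rpow_natCast (2 : ℝ≥0∞) m,
            ← ENNReal.rpow_mul, mul_comm (m : ℝ) q, ENNReal.rpow_mul, h2q,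
            ENNReal.rpow_natCast]
        rwa [h2] at h1
      calc u * B ^ q ≤ ((k : ℝ≥0∞) ^ (m + 1) * v) * B ^ q := _root_.mul_le_mul_left hfind _
        _ = (k : ℝ≥0∞) * v * ((k : ℝ≥0∞) ^ m * B ^ q) := by ring
        _ ≤ (k : ℝ≥0∞) * v * A ^ q := _root_.mul_le_mul_right hpowq _
  -- convert key into the goal
  have hgoal : u * (A ^ q)⁻¹ ≤ (k : ℝ≥0∞) * (v * (B ^ q)⁻¹) := by
    have e1 : u * (A ^ q)⁻¹ = (u * B ^ q) * ((B ^ q)⁻¹ * (A ^ q)⁻¹) := by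
      calc u * (A ^ q)⁻¹ = u * (B ^ q * (B ^ q)⁻¹) * (A ^ q)⁻¹ := by
            rw [ENNReal.mul_inv_cancel hBq0 hBqt, mul_one]
        _ = (u * B ^ q) * ((B ^ q)⁻¹ * (A ^ q)⁻¹) := by ring
    have e2 : ((k : ℝ≥0∞) * v * A ^ q) * ((B ^ q)⁻¹ * (A ^ q)⁻¹) =
        (k : ℝ≥0∞) * (v * (B ^ q)⁻¹) := by
      calc ((k : ℝ≥0∞) * v * A ^ q) * ((B ^ q)⁻¹ * (A ^ q)⁻¹)
          = (k : ℝ≥0∞) * (v * (B ^ q)⁻¹) * (A ^ q * (A ^ q)⁻¹) := by ring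
        _ = (k : ℝ≥0∞) * (v * (B ^ q)⁻¹) := by
            rw [ENNReal.mul_inv_cancel hAq0 hAqt, mul_one]
    rw [e1, ← e2]
    exact _root_.mul_le_mul_left key _
  rw [ENNReal.rpow_neg, ENNReal.rpow_neg]
  exact hgoal
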